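/- Let D = max{|a|, |A|, |b|, |B|}. Then for every m ∈ ℕ with m ≥ 1, every n = ±(2m+1), every r ∈ ℤ_{≥0}, and every z ∈ ℂ with |z| ≤ 1/2, one has |σ⁺_r(n,z)| ≤ D · (8D²/m)^{m+r}. Consequently there exist C > 0 and m₀ ∈ ℕ such that for all m ≥ m₀, n = ±(2m+1), and |z| ≤ 1/2, the series ∑_{r=0}^∞ σ⁺_r(n,z) converges absolutely and |β⁺_n(z)| ≤ C · (8D²/m)^m. -/

import Mathlib

open Finset

noncomputable section

/-- Coefficient function `p`: `p(2) = A`, `p(-2) = a`. -/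
def pc (a A : ℂ) (w : ℤ) : ℂ := if w = 2 then A else if w = -2 then a else 0

/-- Coefficient function `q`: `q(2) = B`, `q(-2) = b`. -/
def qc (b B : ℂ) (w : ℤ) : ℂ := if w = 2 then B else if w = -2 then b else 0

/-- Vertex `j_k = -n + x_1 + ⋯ + x_k` of a walk `x` starting at `-n`. -/
def vtx (n : ℤ) (x : List ℤ) (k : ℕ) : ℤ := -n + (x.take k).sum

/-- An admissible walk from `-n` to `n`: odd length, steps in `{-2, 2}`, total sum `2n`,
and the vertices `j_k` (for `1 ≤ k < length`) satisfy `j_k ≠ n` for odd `k` and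
`j_k ≠ -n` for even `k`. -/
def AdmX (n : ℤ) (x : List ℤ) : Prop :=
  Odd x.length ∧ (∀ s ∈ x, s = 2 ∨ s = -2) ∧ x.sum = 2 * n ∧
    ∀ k : ℕ, 1 ≤ k → k < x.length →
      (Odd k → vtx n x k ≠ n) ∧ (Even k → vtx n x k ≠ -n)

/-- `X_n(r)`: admissible walks from `-n` to `n` with exactly `r` negative steps if `n > 0`,
resp. exactly `r` positive steps if `n < 0`. -/
def Xw (n : ℤ) (r : ℕ) : Set (List ℤ) :=
  {x | AdmX n x ∧ (0 < n → x.count (-2) = r) ∧ (n < 0 → x.count 2 = r)}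

/-- Numerator of `h⁺`: `q(x_1) p(x_2) q(x_3) ⋯ p(x_{2ν}) q(x_{2ν+1})`. -/
def numX (a A b B : ℂ) (x : List ℤ) : ℂ :=
  ∏ t ∈ Finset.range x.length,
    (if t % 2 = 0 then qc b B (x.getD t 0) else pc a A (x.getD t 0))

/-- Denominator of `h⁺`: the product of the factors `(n - j_k + z)` for odd `k` and
`(n + j_k + z)` for even `k`, `1 ≤ k ≤ 2ν`. -/
def denX (n : ℤ) (x : List ℤ) (z : ℂ) : ℂ :=
  ∏ k ∈ Finset.Icc 1 (x.length - 1),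
    (if k % 2 = 1 then ((n : ℂ) - (vtx n x k : ℂ) + z) else ((n : ℂ) + (vtx n x k : ℂ) + z))

/-- `h⁺(x, z)`. -/
def hX (a A b B : ℂ) (n : ℤ) (x : List ℤ) (z : ℂ) : ℂ := numX a A b B x / denX n x z

/-- `σ⁺_r(n, z) = ∑_{x ∈ X_n(r)} h⁺(x, z)`. -/
def sigmaX (a A b B : ℂ) (n : ℤ) (r : ℕ) (z : ℂ) : ℂ :=
  ∑' x : Xw n r, hX a A b B n (x : List ℤ) z

/-- `β⁺_n(z) = ∑_{r=0}^∞ σ⁺_r(n, z)`. -/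
def betaX (a A b B : ℂ) (n : ℤ) (z : ℂ) : ℂ := ∑' r : ℕ, sigmaX a A b B n r z

/-- With `D = max {|a|, |A|, |b|, |B|}`: for `m ≥ 1`, `n = ±(2m+1)`, every `r ∈ ℤ_{≥0}`
and `|z| ≤ 1/2` one has `|σ⁺_r(n, z)| ≤ D (8D²/m)^(m+r)`; consequently there are
`C > 0` and `m₀` such that for `m ≥ m₀` the series `∑_r σ⁺_r(n, z)` converges
absolutely and `|β⁺_n(z)| ≤ C (8D²/m)^m`. -/
-- AUX

lemma sum_count_aux (x : List ℤ) (h : ∀ s ∈ x, s = 2 ∨ s = -2) :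
    x.sum = 2 * (x.count 2 : ℤ) - 2 * (x.count (-2) : ℤ) ∧
      x.length = x.count 2 + x.count (-2) := by
  induction x with
  | nil => simp
  | cons c t ih =>
    have hc := h c (by simp)
    obtain ⟨h1, h2⟩ := ih (fun s hs => h s (List.mem_cons_of_mem _ hs))
    rcases hc with rfl | rfl <;>
      constructor <;> simp [List.count_cons, h1, h2] <;> push_cast <;> ring

lemma xw_length {n : ℤ} {r m : ℕ} (hn : n = 2*(m:ℤ)+1 ∨ n = -(2*(m:ℤ)+1)) {x : List ℤ}
    (hx : x ∈ Xw n r) : x.length = 2*m+1+2*r := by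
  obtain ⟨⟨_, hsteps, hsum, _⟩, hpos, hneg⟩ := hx
  obtain ⟨h1, h2⟩ := sum_count_aux x hsteps
  rcases hn with rfl | rfl
  · have := hpos (by positivity)
    omega
  · have := hneg (by omega)
    omega

lemma getD_mem {x : List ℤ} {k : ℕ} (hk : k < x.length) : x.getD k 0 ∈ x := by
  rw [List.getD_eq_getElem x 0 hk]
  exact List.getElem_mem hk

lemma vtx_step {n : ℤ} {x : List ℤ} {k : ℕ} (hk : k < x.length) :
    vtx n x (k+1) = vtx n x k + x.getD k 0 := by
  unfold vtx
  rw [List.take_succ, List.sum_append, List.getD_eq_getElem x 0 hk]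
  simp [List.getElem?_eq_getElem hk]
  ring

lemma vtx_even {n : ℤ} {x : List ℤ} (h : ∀ s ∈ x, s = 2 ∨ s = -2) (k : ℕ) :
    2 ∣ (n + vtx n x k) ∧ 2 ∣ (n - vtx n x k) := by
  have hs : 2 ∣ (x.take k).sum := by
    apply List.dvd_sum
    intro s hs
    rcases h s (List.mem_of_mem_take hs) with rfl | rfl <;> decide
  unfold vtx
  obtain ⟨c, hc⟩ := hs
  exact ⟨⟨c, by omega⟩, ⟨n - c, by omega⟩⟩

lemma prod_Icc_pair (g : ℕ → ℝ) (ν : ℕ) :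
    ∏ k ∈ Icc 1 (2*ν), g k = ∏ j ∈ range ν, (g (2*j+1) * g (2*j+2)) := by
  induction ν with
  | zero => simp
  | succ ν ih =>
    have h2 : 2*(ν+1) = (2*ν+1)+1 := by ring
    rw [h2, Finset.prod_Icc_succ_top (by omega), Finset.prod_Icc_succ_top (by omega), ih,
      Finset.prod_range_succ, show 2*ν+1+1 = 2*ν+2 from rfl]
    ring

lemma hD0 {a A b B : ℂ} (ha : a ≠ 0) {D : ℝ}
    (hD : D = max (max ‖a‖ ‖A‖) (max ‖b‖ ‖B‖)) : 0 < D := by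
  have : 0 < ‖a‖ := norm_pos_iff.mpr ha
  have : ‖a‖ ≤ D := by rw [hD]; exact le_max_of_le_left (le_max_left _ _)
  linarith

lemma num_bound (a A b B : ℂ) (D : ℝ)
    (hD : D = max (max ‖a‖ ‖A‖) (max ‖b‖ ‖B‖)) {x : List ℤ}
    (hsteps : ∀ s ∈ x, s = 2 ∨ s = -2) :
    ‖numX a A b B x‖ ≤ D ^ x.length := by
  have hD0 : 0 ≤ D := by
    rw [hD]; exact le_trans (norm_nonneg a) (le_max_of_le_left (le_max_left _ _))
  rw [numX, norm_prod]
  calc ∏ t ∈ range x.length, ‖if t % 2 = 0 then qc b B (x.getD t 0) else pc a A (x.getD t 0)‖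
      ≤ ∏ _t ∈ range x.length, D := by
        apply Finset.prod_le_prod (fun _ _ => norm_nonneg _)
        intro t ht
        rw [Finset.mem_range] at ht
        by_cases ht2 : t % 2 = 0 <;>
          [rw [if_pos ht2]; rw [if_neg ht2]] <;>
          rcases hsteps _ (getD_mem ht) with hv | hv <;> rw [hv] <;>
          simp [qc, pc, hD, le_max_iff]
    _ = D ^ x.length := by simp

lemma den_bound (m r : ℕ) (hm : 1 ≤ m) (n : ℤ)
    (hn : n = 2*(m:ℤ)+1 ∨ n = -(2*(m:ℤ)+1)) {x : List ℤ} (hx : x ∈ Xw n r)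
    (z : ℂ) (hz : ‖z‖ ≤ 1/2) : ((m:ℝ))^(m+r) ≤ ‖denX n x z‖ := by
  have hlen : x.length = 2*m+1+2*r := xw_length hn hx
  obtain ⟨⟨hodd, hsteps, hsum, hadm⟩, _, _⟩ := hx
  have hlen1 : x.length - 1 = 2*(m+r) := by omega
  rw [denX, norm_prod, hlen1, prod_Icc_pair]
  have hstep : ∀ j ∈ range (m+r), (m:ℝ) ≤
      (fun k => ‖if k % 2 = 1 then ((n : ℂ) - (vtx n x k : ℂ) + z)
        else ((n : ℂ) + (vtx n x k : ℂ) + z)‖) (2*j+1) *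
      (fun k => ‖if k % 2 = 1 then ((n : ℂ) - (vtx n x k : ℂ) + z)
        else ((n : ℂ) + (vtx n x k : ℂ) + z)‖) (2*j+2) := by
    intro j hj
    rw [Finset.mem_range] at hj
    simp only
    rw [if_pos (by omega : (2*j+1) % 2 = 1), if_neg (by omega : ¬ (2*j+2) % 2 = 1)]
    have hk1 : 2*j+1 < x.length := by omega
    have hk2 : 2*j+2 < x.length := by omega
    -- integer facts
    have hne1 : vtx n x (2*j+1) ≠ n := (hadm (2*j+1) (by omega) hk1).1 ⟨j, by ring⟩
    have hne2 : vtx n x (2*j+2) ≠ -n := (hadm (2*j+2) (by omega) hk2).2 ⟨j+1, by ring⟩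
    have hd1 : 2 ∣ (n - vtx n x (2*j+1)) := (vtx_even hsteps _).2
    have hd2 : 2 ∣ (n + vtx n x (2*j+2)) := (vtx_even hsteps _).1
    set u : ℤ := n - vtx n x (2*j+1) with hu
    set v : ℤ := n + vtx n x (2*j+2) with hv
    have hu2 : 2 ≤ |u| := by simp only [Int.abs_eq_natAbs]; omega
    have hv2 : 2 ≤ |v| := by simp only [Int.abs_eq_natAbs]; omega
    have hsum4 : 4*(m:ℤ) ≤ |u| + |v| := by
      have hstep := vtx_step (n := n) hk1
      have hs : x.getD (2*j+1) 0 = 2 ∨ x.getD (2*j+1) 0 = -2 := hsteps _ (getD_mem hk1)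
      have huv : u + v = 2*n + x.getD (2*j+1) 0 := by
        rw [hu, hv, show 2*j+2 = (2*j+1)+1 from rfl, hstep]; ring
      simp only [Int.abs_eq_natAbs]
      rcases hn with rfl | rfl <;> rcases hs with hs | hs <;> rw [hs] at huv <;> omega
    -- pass to real norms
    have hnu : ‖(n : ℂ) - (vtx n x (2*j+1) : ℂ)‖ = (|u| : ℝ) := by
      rw [show (n : ℂ) - (vtx n x (2*j+1) : ℂ) = ((u : ℤ) : ℂ) by push_cast [hu]; ring]
      rw [Complex.norm_intCast, ← Int.cast_abs]
    have hnv : ‖(n : ℂ) + (vtx n x (2*j+2) : ℂ)‖ = (|v| : ℝ) := by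
      rw [show (n : ℂ) + (vtx n x (2*j+2) : ℂ) = ((v : ℤ) : ℂ) by push_cast [hv]; ring]
      rw [Complex.norm_intCast, ← Int.cast_abs]
    have hb1 : (|u| : ℝ) - 1/2 ≤ ‖(n : ℂ) - (vtx n x (2*j+1) : ℂ) + z‖ := by
      have := norm_sub_norm_le ((n : ℂ) - (vtx n x (2*j+1) : ℂ)) (-z)
      rw [sub_neg_eq_add, norm_neg, hnu] at this
      linarith
    have hb2 : (|v| : ℝ) - 1/2 ≤ ‖(n : ℂ) + (vtx n x (2*j+2) : ℂ) + z‖ := by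
      have := norm_sub_norm_le ((n : ℂ) + (vtx n x (2*j+2) : ℂ)) (-z)
      rw [sub_neg_eq_add, norm_neg, hnv] at this
      linarith
    have hu2' : (2:ℝ) ≤ (|u| : ℝ) := by exact_mod_cast hu2
    have hv2' : (2:ℝ) ≤ (|v| : ℝ) := by exact_mod_cast hv2
    have hsum4' : 4*(m:ℝ) ≤ (|u| : ℝ) + (|v| : ℝ) := by exact_mod_cast hsum4
    have hm' : (1:ℝ) ≤ (m:ℝ) := by exact_mod_cast hm
    calc (m:ℝ) ≤ ((|u| : ℝ) - 1/2) * ((|v| : ℝ) - 1/2) := by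
          nlinarith [mul_nonneg (by linarith : (0:ℝ) ≤ (|u| : ℝ) - 2) (by linarith : (0:ℝ) ≤ (|v| : ℝ) - 2)]
      _ ≤ _ := by
          apply mul_le_mul hb1 hb2 (by linarith) (norm_nonneg _)
  calc ((m:ℝ))^(m+r) = ∏ _j ∈ range (m+r), (m:ℝ) := by simp
    _ ≤ _ := Finset.prod_le_prod (fun _ _ => by positivity) hstep

def enc (L : ℕ) (x : List ℤ) : Fin L → Bool := fun i => decide (x.getD i 0 = 2)

lemma enc_injOn {n : ℤ} {r m : ℕ} (hn : n = 2*(m:ℤ)+1 ∨ n = -(2*(m:ℤ)+1)) :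
    Set.InjOn (enc (2*m+1+2*r)) (Xw n r) := by
  intro x hx y hy hxy
  have hlx := xw_length hn hx
  have hly := xw_length hn hy
  apply List.ext_getElem (by omega)
  intro i h1 h2
  have hi : i < 2*m+1+2*r := by omega
  have hfun := congrFun hxy ⟨i, hi⟩
  simp only [enc, decide_eq_decide] at hfun
  rw [List.getD_eq_getElem x 0 h1, List.getD_eq_getElem y 0 h2] at hfun
  have hx2 := hx.1.2.1 _ (List.getElem_mem h1)
  have hy2 := hy.1.2.1 _ (List.getElem_mem h2)
  rcases hx2 with hx2 | hx2 <;> rcases hy2 with hy2 | hy2 <;> omega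

lemma xw_finite {n : ℤ} {r m : ℕ} (hn : n = 2*(m:ℤ)+1 ∨ n = -(2*(m:ℤ)+1)) :
    (Xw n r).Finite :=
  Set.Finite.of_finite_image (Set.toFinite _) (enc_injOn (r := r) hn)

lemma xw_card {n : ℤ} {r m : ℕ} (hn : n = 2*(m:ℤ)+1 ∨ n = -(2*(m:ℤ)+1)) :
    (xw_finite (r := r) hn).toFinset.card ≤ 2^(2*m+1+2*r) := by
  have := Finset.card_le_card_of_injOn
    (f := enc (2*m+1+2*r)) (t := (Finset.univ : Finset (Fin (2*m+1+2*r) → Bool)))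
    (s := (xw_finite (r := r) hn).toFinset)
    (fun _ _ => Finset.mem_univ _)
    (fun x hx y hy hxy =>
      enc_injOn (r := r) hn (by simpa using hx) (by simpa using hy) hxy)
  simpa using this

lemma sigma_bound (a A b B : ℂ) (ha : a ≠ 0) (D : ℝ)
    (hD : D = max (max ‖a‖ ‖A‖) (max ‖b‖ ‖B‖)) (m r : ℕ) (hm : 1 ≤ m) (n : ℤ)
    (hn : n = 2*(m:ℤ)+1 ∨ n = -(2*(m:ℤ)+1)) (z : ℂ) (hz : ‖z‖ ≤ 1/2) :
    ‖sigmaX a A b B n r z‖ ≤ D * (8 * D ^ 2 / (m : ℝ)) ^ (m + r) := by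
  have hDpos : 0 < D := hD0 ha hD
  have hmR : (0:ℝ) < (m:ℝ) := by exact_mod_cast hm
  have hfin : (Xw n r).Finite := xw_finite (r := r) hn
  have hsum : sigmaX a A b B n r z = ∑ x ∈ hfin.toFinset, hX a A b B n x z := by
    rw [sigmaX, _root_.tsum_subtype (Xw n r) (fun y => hX a A b B n y z)]
    rw [tsum_eq_sum (s := hfin.toFinset)
      (fun b hb => Set.indicator_of_notMem (by simpa using hb) _)]
    exact Finset.sum_congr rfl fun x hx => Set.indicator_of_mem (by simpa using hx) _
  have hterm : ∀ x ∈ hfin.toFinset, ‖hX a A b B n x z‖ ≤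
      D^(2*m+1+2*r) / (m:ℝ)^(m+r) := by
    intro x hx
    rw [Set.Finite.mem_toFinset] at hx
    have h1 := num_bound a A b B D hD hx.1.2.1
    rw [xw_length hn hx] at h1
    have h2 := den_bound m r hm n hn hx z hz
    rw [hX, norm_div]
    exact div_le_div₀ (by positivity) h1 (by positivity) h2
  have hcard := xw_card (r := r) hn
  have hpow : ∀ c : ℝ, c^(2*(m+r)+1) = (c^2)^(m+r) * c := fun c => by
    rw [pow_succ, pow_mul]
  have hL : 2*m+1+2*r = 2*(m+r)+1 := by ring
  have h2le : (2:ℝ) ≤ 2^(m+r) := le_self_pow₀ one_le_two (by omega)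
  have hnum : (2:ℝ)^(2*(m+r)+1) * D^(2*(m+r)+1) ≤ D * (8*D^2)^(m+r) := by
    rw [hpow 2, hpow D, show ((2:ℝ)^2) = 4 by norm_num,
      show D * (8*D^2)^(m+r) = 2^(m+r) * (4^(m+r) * (D^2)^(m+r) * D) by
        rw [show (8:ℝ)*D^2 = 2*(4*D^2) by ring, mul_pow, mul_pow]; ring]
    calc (4:ℝ)^(m+r) * 2 * ((D^2)^(m+r) * D)
        = 2 * (4^(m+r) * (D^2)^(m+r) * D) := by ring
      _ ≤ 2^(m+r) * (4^(m+r) * (D^2)^(m+r) * D) :=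
          mul_le_mul_of_nonneg_right h2le (by positivity)
  calc ‖sigmaX a A b B n r z‖
      = ‖∑ x ∈ hfin.toFinset, hX a A b B n x z‖ := by rw [hsum]
    _ ≤ ∑ x ∈ hfin.toFinset, ‖hX a A b B n x z‖ := norm_sum_le _ _
    _ ≤ hfin.toFinset.card • (D^(2*m+1+2*r) / (m:ℝ)^(m+r)) :=
        Finset.sum_le_card_nsmul _ _ _ hterm
    _ = (hfin.toFinset.card : ℝ) * (D^(2*m+1+2*r) / (m:ℝ)^(m+r)) := by
        rw [nsmul_eq_mul]
    _ ≤ (2:ℝ)^(2*m+1+2*r) * (D^(2*m+1+2*r) / (m:ℝ)^(m+r)) := by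
        apply mul_le_mul_of_nonneg_right _ (by positivity)
        exact_mod_cast hcard
    _ = ((2:ℝ)^(2*(m+r)+1) * D^(2*(m+r)+1)) / (m:ℝ)^(m+r) := by
        rw [hL]; ring
    _ ≤ (D * (8*D^2)^(m+r)) / (m:ℝ)^(m+r) := by
        apply div_le_div_of_nonneg_right hnum (by positivity) |>.trans_eq rfl
    _ = D * (8 * D ^ 2 / (m : ℝ)) ^ (m + r) := by
        rw [div_pow]; ring


theorem stmt3 (a A b B : ℂ) (ha : a ≠ 0) (hA : A ≠ 0) (hb : b ≠ 0) (hB : B ≠ 0)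
    (D : ℝ) (hD : D = max (max ‖a‖ ‖A‖) (max ‖b‖ ‖B‖)) :
    (∀ m : ℕ, 1 ≤ m → ∀ n : ℤ, (n = 2 * m + 1 ∨ n = -(2 * m + 1)) →
      ∀ r : ℕ, ∀ z : ℂ, ‖z‖ ≤ 1 / 2 →
        ‖sigmaX a A b B n r z‖ ≤ D * (8 * D ^ 2 / (m : ℝ)) ^ (m + r)) ∧
    ∃ C > (0 : ℝ), ∃ m₀ : ℕ, ∀ m : ℕ, m₀ ≤ m → ∀ n : ℤ,
      (n = 2 * m + 1 ∨ n = -(2 * m + 1)) → ∀ z : ℂ, ‖z‖ ≤ 1 / 2 →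
        Summable (fun r : ℕ => ‖sigmaX a A b B n r z‖) ∧
        ‖betaX a A b B n z‖ ≤ C * (8 * D ^ 2 / (m : ℝ)) ^ m := by
  have hDpos : 0 < D := hD0 ha hD
  have part1 : ∀ m : ℕ, 1 ≤ m → ∀ n : ℤ, (n = 2 * m + 1 ∨ n = -(2 * m + 1)) →
      ∀ r : ℕ, ∀ z : ℂ, ‖z‖ ≤ 1 / 2 →
        ‖sigmaX a A b B n r z‖ ≤ D * (8 * D ^ 2 / (m : ℝ)) ^ (m + r) :=
    fun m hm n hn r z hz => sigma_bound a A b B ha D hD m r hm n hn z hz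
  refine ⟨part1, 2*D, by linarith, ⌈16*D^2⌉₊ + 1, ?_⟩
  intro m hm n hn z hz
  have hm1 : 1 ≤ m := by
    have : 1 ≤ ⌈16*D^2⌉₊ + 1 := by omega
    omega
  have hmR : (0:ℝ) < (m:ℝ) := by exact_mod_cast hm1
  set q : ℝ := 8 * D ^ 2 / (m : ℝ) with hq
  have hq0 : 0 < q := by positivity
  have hqle : q ≤ 1/2 := by
    rw [hq, div_le_iff₀ hmR]
    have h1 : (16*D^2 : ℝ) ≤ (⌈16*D^2⌉₊ : ℝ) := Nat.le_ceil _
    have h2 : ((⌈16*D^2⌉₊ : ℕ) : ℝ) + 1 ≤ (m:ℝ) := by exact_mod_cast hm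
    linarith
  have hqlt : q < 1 := lt_of_le_of_lt hqle (by norm_num)
  have hbound : ∀ r : ℕ, ‖sigmaX a A b B n r z‖ ≤ (D * q^m) * q^r := by
    intro r
    have := part1 m hm1 n hn r z hz
    rw [hq]
    calc ‖sigmaX a A b B n r z‖ ≤ D * (8 * D ^ 2 / (m : ℝ)) ^ (m + r) := this
      _ = D * (8 * D ^ 2 / (m : ℝ))^m * (8 * D ^ 2 / (m : ℝ))^r := by
          rw [pow_add]; ring
  have hgeo : Summable (fun r : ℕ => (D * q^m) * q^r) :=
    (summable_geometric_of_lt_one hq0.le hqlt).mul_left _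
  have hsummable : Summable (fun r : ℕ => ‖sigmaX a A b B n r z‖) :=
    Summable.of_nonneg_of_le (fun _ => norm_nonneg _) hbound hgeo
  refine ⟨hsummable, ?_⟩
  calc ‖betaX a A b B n z‖ ≤ ∑' r : ℕ, ‖sigmaX a A b B n r z‖ :=
        norm_tsum_le_tsum_norm hsummable
    _ ≤ ∑' r : ℕ, (D * q^m) * q^r := Summable.tsum_le_tsum hbound hsummable hgeo
    _ = (D * q^m) * (1 - q)⁻¹ := by
        rw [tsum_mul_left, tsum_geometric_of_lt_one hq0.le hqlt]
    _ ≤ (D * q^m) * 2 := by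
        apply mul_le_mul_of_nonneg_left _ (by positivity)
        rw [inv_le_comm₀ (by linarith) (by norm_num)]
        linarith
    _ = 2*D * (8 * D ^ 2 / (m : ℝ)) ^ m := by rw [hq]; ring
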